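/- Let A₁ be an n×n signed bipartite adjacency matrix with parts of sizes s and n−s, let A₂ be an m×m signed adjacency matrix, and let 𝒜 = A₁⊗I_m + D⊗A₂ be the signed Cartesian product matrix, where D = diag(I_s, −I_{n−s}). Then the characteristic polynomial of 𝒜 equals the characteristic polynomial of −𝒜 if and only if n = 2s or the characteristic polynomial of A₂ equals the characteristic polynomial of −A₂; that is, the spectrum of the signed Cartesian product is symmetric if and only if the signed bipartite graph is balanced or the spectrum of A₂ is symmetric. -/

import Mathlib

open Matrix Kronecker Polynomial Finset

section Aux

variable {n R : Type*} [Fintype n] [DecidableEq n] [CommRing R]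

theorem aux_charpoly_units_conj (u : (Matrix n n R)ˣ) (B : Matrix n n R) :
    ((u : Matrix n n R) * B * (↑u⁻¹ : Matrix n n R)).charpoly = B.charpoly := by
  have hc : charmatrix ((u : Matrix n n R) * B * (↑u⁻¹ : Matrix n n R)) =
      ((u : Matrix n n R).map C) * charmatrix B * ((↑u⁻¹ : Matrix n n R).map C) := by
    unfold charmatrix
    rw [Matrix.mul_sub, Matrix.sub_mul]
    congr 1
    · rw [mul_assoc, (scalar_commute (X : R[X]) (fun r => Commute.all _ r) _).eq, ← mul_assoc]
      have : ((u : Matrix n n R).map C) * ((↑u⁻¹ : Matrix n n R).map C) = 1 := by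
        rw [← Matrix.map_mul, Units.mul_inv, Matrix.map_one _ (map_zero C) (map_one C)]
      rw [this, one_mul]
    · simp only [RingHom.mapMatrix_apply]
      rw [← Matrix.map_mul, ← Matrix.map_mul]
  rw [Matrix.charpoly, Matrix.charpoly, hc, det_mul, det_mul]
  have : ((u : Matrix n n R).map C).det * ((↑u⁻¹ : Matrix n n R).map C).det = 1 := by
    rw [← det_mul, ← Matrix.map_mul, Units.mul_inv, Matrix.map_one _ (map_zero C) (map_one C),
      det_one]
  calc ((u : Matrix n n R).map C).det * (charmatrix B).det * ((↑u⁻¹ : Matrix n n R).map C).det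
      = ((u : Matrix n n R).map C).det * ((↑u⁻¹ : Matrix n n R).map C).det
        * (charmatrix B).det := by ring
    _ = (charmatrix B).det := by rw [this, one_mul]

theorem aux_charpoly_diagonal (d : n → R) :
    (diagonal d).charpoly = ∏ i, (X - C (d i)) := by
  have hc : charmatrix (diagonal d) = diagonal (fun i => X - C (d i)) := by
    ext i j
    by_cases h : i = j
    · subst h; simp
    · simp [h, charmatrix_apply_ne _ _ _ h, diagonal_apply_ne _ h]
  rw [Matrix.charpoly, hc, det_diagonal]

theorem aux_units_conj_pow (u : (Matrix n n R)ˣ) (B : Matrix n n R) (k : ℕ) :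
    ((u : Matrix n n R) * B * (↑u⁻¹ : Matrix n n R)) ^ k
      = (u : Matrix n n R) * B ^ k * (↑u⁻¹ : Matrix n n R) := by
  induction k with
  | zero => simp
  | succ k ih =>
      rw [pow_succ, ih, pow_succ]
      calc (u : Matrix n n R) * B ^ k * (↑u⁻¹ : Matrix n n R) *
            ((u : Matrix n n R) * B * (↑u⁻¹ : Matrix n n R))
          = (u : Matrix n n R) * B ^ k * ((↑u⁻¹ : Matrix n n R) *
            (u : Matrix n n R)) * B * (↑u⁻¹ : Matrix n n R) := by
            simp only [mul_assoc]
        _ = (u : Matrix n n R) * (B ^ k * B) * (↑u⁻¹ : Matrix n n R) := by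
            rw [Units.inv_mul]; simp only [mul_one, mul_assoc]

end Aux

theorem aux_newton_rec (E p : ℕ → ℝ) (hE0 : E 0 = 1)
    (hrec : ∀ k : ℕ, (k : ℝ) * E k = (-1) ^ (k + 1) *
      ∑ a ∈ (antidiagonal k).filter (fun a => a.1 < k), (-1) ^ a.1 * E a.1 * p a.2) :
    (∀ k, Odd k → E k = 0) ↔ (∀ k, Odd k → p k = 0) := by
  constructor
  · intro hE
    intro k hk
    induction k using Nat.strong_induction_on with
    | _ k ih =>
      have hk0 : k ≠ 0 := by rintro rfl; have := Nat.odd_iff.mp hk; omega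
      have hsum : ∑ a ∈ (antidiagonal k).filter (fun a => a.1 < k),
          (-1 : ℝ) ^ a.1 * E a.1 * p a.2 = p k := by
        rw [Finset.sum_eq_single (0, k)]
        · simp [hE0]
        · rintro ⟨a, b⟩ hab hne
          simp only [mem_filter, HasAntidiagonal.mem_antidiagonal] at hab
          obtain ⟨hab1, hab2⟩ := hab
          have ha0 : a ≠ 0 := by
            rintro rfl
            simp only [zero_add] at hab1
            exact hne (by rw [hab1])
          rcases Nat.even_or_odd a with haeven | haodd
          · have hbodd : Odd b := by
              rcases Nat.even_or_odd b with hbe | hbo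
              · exfalso
                have : Even (a + b) := haeven.add hbe
                rw [hab1] at this
                exact (Nat.not_even_iff_odd.mpr hk) this
              · exact hbo
            have hblt : b < k := by omega
            rw [ih b hblt hbodd, mul_zero]
          · rw [hE a haodd, mul_zero, zero_mul]
        · intro h
          exfalso
          exact h (by simp [mem_filter, HasAntidiagonal.mem_antidiagonal, Nat.pos_of_ne_zero hk0])
      have := hrec k
      rw [hE k hk, mul_zero, hsum] at this
      have hne : ((-1 : ℝ) ^ (k + 1)) ≠ 0 := by simp
      field_simp at this
      exact (mul_eq_zero.mp this.symm).resolve_left hne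
  · intro hp
    intro k hk
    induction k using Nat.strong_induction_on with
    | _ k ih =>
      have hk0 : k ≠ 0 := by rintro rfl; have := Nat.odd_iff.mp hk; omega
      have hsum : ∑ a ∈ (antidiagonal k).filter (fun a => a.1 < k),
          (-1 : ℝ) ^ a.1 * E a.1 * p a.2 = 0 := by
        apply Finset.sum_eq_zero
        rintro ⟨a, b⟩ hab
        simp only [mem_filter, HasAntidiagonal.mem_antidiagonal] at hab
        obtain ⟨hab1, hab2⟩ := hab
        rcases Nat.even_or_odd b with hbeven | hbodd
        · have haodd : Odd a := by
            rcases Nat.even_or_odd a with hae | hao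
            · exfalso
              have : Even (a + b) := hae.add hbeven
              rw [hab1] at this
              exact (Nat.not_even_iff_odd.mpr hk) this
            · exact hao
          rw [ih a hab2 haodd, mul_zero, zero_mul]
        · rw [hp b hbodd, mul_zero]
      have := hrec k
      rw [hsum, mul_zero] at this
      have hkR : (k : ℝ) ≠ 0 := Nat.cast_ne_zero.mpr hk0
      exact (mul_eq_zero.mp this).resolve_left hkR

theorem aux_esymm_prod_iff {ι : Type*} [Fintype ι] [DecidableEq ι] (d : ι → ℝ) :
    (∏ i, (X - C (d i)) = ∏ i, (X + C (d i)))
      ↔ ∀ j, Odd j → ((univ.val.map d).esymm j = 0) := by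
  set μ : Multiset ℝ := univ.val.map d with hμ
  have hcard : Multiset.card μ = Fintype.card ι := by simp [hμ]
  have hprodadd : ∏ i, (X + C (d i)) = (μ.map fun r => X + C r).prod := by
    rw [hμ, Multiset.map_map]; rfl
  have hprodsub : ∏ i, (X - C (d i)) = (μ.map fun r => X - C r).prod := by
    rw [hμ, Multiset.map_map]; rfl
  set N := Fintype.card ι with hN
  have hEzero : ∀ j, N < j → μ.esymm j = 0 := by
    intro j hj
    rw [hμ, Finset.esymm_map_val]
    rw [Finset.powersetCard_eq_empty.mpr (by simpa using hj), Finset.sum_empty]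
  have hdegsub : (∏ i, (X - C (d i)) : ℝ[X]).natDegree = N := by
    rw [Polynomial.natDegree_prod _ _ (fun i _ => X_sub_C_ne_zero (d i))]
    simp [natDegree_X_sub_C, hN, Finset.card_univ]
  have hdegadd : (∏ i, (X + C (d i)) : ℝ[X]).natDegree = N := by
    rw [Polynomial.natDegree_prod _ _ (fun i _ => X_add_C_ne_zero (d i))]
    simp [natDegree_X_add_C, hN, Finset.card_univ]
  constructor
  · intro h j hj
    by_cases hjN : j ≤ N
    · have h1 := Multiset.prod_X_sub_C_coeff μ (k := N - j) (by omega)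
      have h2 := Multiset.prod_X_add_C_coeff μ (k := N - j) (by omega)
      rw [← hprodsub] at h1
      rw [← hprodadd] at h2
      rw [h] at h1
      rw [h2] at h1
      rw [hcard] at h1
      have hNNj : N - (N - j) = j := by omega
      rw [hNNj] at h1
      have : (-1 : ℝ) ^ j = -1 := Odd.neg_one_pow hj
      rw [this] at h1
      linarith [h1]
    · exact hEzero j (by omega)
  · intro hE
    apply Polynomial.ext
    intro k
    by_cases hk : k ≤ N
    · have h1 := Multiset.prod_X_sub_C_coeff μ (k := k) (by omega)
      have h2 := Multiset.prod_X_add_C_coeff μ (k := k) (by omega)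
      rw [← hprodsub] at h1
      rw [← hprodadd] at h2
      rw [h1, h2, hcard]
      rcases Nat.even_or_odd (N - k) with he | ho
      · rw [he.neg_one_pow, one_mul]
      · rw [hE _ ho, mul_zero]
    · rw [Polynomial.coeff_eq_zero_of_natDegree_lt
          (by omega : (∏ i, (X - C (d i)) : ℝ[X]).natDegree < k),
        Polynomial.coeff_eq_zero_of_natDegree_lt
          (by omega : (∏ i, (X + C (d i)) : ℝ[X]).natDegree < k)]

theorem aux_newton_eval {ι : Type*} [Fintype ι] [DecidableEq ι] (d : ι → ℝ) (k : ℕ) :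
    (k : ℝ) * (univ.val.map d).esymm k = (-1) ^ (k + 1) *
      ∑ a ∈ (antidiagonal k).filter (fun a => a.1 < k),
        (-1) ^ a.1 * (univ.val.map d).esymm a.1 * (∑ i, d i ^ a.2) := by
  have h := congrArg (MvPolynomial.aeval d) (MvPolynomial.mul_esymm_eq_sum ι ℝ k)
  simp only [_root_.map_mul, map_sum, map_pow, map_neg, _root_.map_one, map_natCast,
    MvPolynomial.aeval_esymm_eq_multiset_esymm, MvPolynomial.psum, MvPolynomial.aeval_X] at h
  exact h

/-- For a real symmetric (Hermitian) matrix, the characteristic polynomial is symmetric with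
respect to the origin iff all odd power traces vanish. -/
theorem aux_hermitian_charpoly_neg_iff {ι : Type*} [Fintype ι] [DecidableEq ι]
    (M : Matrix ι ι ℝ) (hM : M.IsHermitian) :
    M.charpoly = (-M).charpoly ↔ ∀ k, Odd k → (M ^ k).trace = 0 := by
  obtain ⟨u, hu⟩ : ∃ u : (Matrix ι ι ℝ)ˣ,
      M = (u : Matrix ι ι ℝ) * diagonal hM.eigenvalues * (↑u⁻¹ : Matrix ι ι ℝ) := by
    have h2 := hM.spectral_theorem
    refine ⟨⟨(hM.eigenvectorUnitary : Matrix ι ι ℝ), star (hM.eigenvectorUnitary : Matrix ι ι ℝ),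
      (Matrix.mem_unitaryGroup_iff).mp hM.eigenvectorUnitary.2,
      (Matrix.mem_unitaryGroup_iff').mp hM.eigenvectorUnitary.2⟩, ?_⟩
    rw [Unitary.conjStarAlgAut_apply] at h2
    exact h2
  set d := hM.eigenvalues with hd
  have hMneg : -M = (u : Matrix ι ι ℝ) * diagonal (fun i => -(d i)) * (↑u⁻¹ : Matrix ι ι ℝ) := by
    rw [hu]
    have : diagonal (fun i => -(d i)) = -(diagonal d) := by
      rw [← diagonal_neg]
    rw [this, Matrix.mul_neg, Matrix.neg_mul]
  have hcp : M.charpoly = ∏ i, (X - C (d i)) := by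
    rw [hu, aux_charpoly_units_conj, aux_charpoly_diagonal]
  have hcpneg : (-M).charpoly = ∏ i, (X + C (d i)) := by
    rw [hMneg, aux_charpoly_units_conj, aux_charpoly_diagonal]
    congr 1
    ext i
    rw [map_neg, sub_neg_eq_add]
  have htr : ∀ k : ℕ, (M ^ k).trace = ∑ i, d i ^ k := by
    intro k
    rw [hu, aux_units_conj_pow, trace_units_conj, diagonal_pow, trace_diagonal]
    rfl
  rw [hcp, hcpneg]
  rw [aux_esymm_prod_iff d]
  have := aux_newton_rec (fun k => (univ.val.map d).esymm k) (fun k => ∑ i, d i ^ k)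
    (by simp [Multiset.esymm]) (fun k => aux_newton_eval d k)
  rw [this]
  constructor
  · intro h k hk; rw [htr k]; exact h k hk
  · intro h k hk; have := h k hk; rw [htr k] at this; exact this

theorem aux_trace_odd_pow (s t m : ℕ) (P : Matrix (Fin s) (Fin t) ℝ)
    (A₂ : Matrix (Fin m) (Fin m) ℝ)
    (A₁ : Matrix (Fin s ⊕ Fin t) (Fin s ⊕ Fin t) ℝ)
    (hA₁ : A₁ = Matrix.fromBlocks 0 P Pᵀ 0)
    (D : Matrix (Fin s ⊕ Fin t) (Fin s ⊕ Fin t) ℝ)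
    (hD : D = Matrix.fromBlocks 1 0 0 (-1)) (e : ℕ) :
    ((A₁ ⊗ₖ (1 : Matrix (Fin m) (Fin m) ℝ) + D ⊗ₖ A₂) ^ (2 * e + 1)).trace
      = ((s : ℝ) - (t : ℝ)) * (A₂ ^ (2 * e + 1)).trace := by
  set XX := A₁ ⊗ₖ (1 : Matrix (Fin m) (Fin m) ℝ) with hXX
  set YY := D ⊗ₖ A₂ with hYY
  have h1 : A₁ * D = -(D * A₁) := by
    subst hA₁ hD
    simp [fromBlocks_multiply, fromBlocks_neg]
  have h2 : D * D = 1 := by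
    subst hD
    rw [fromBlocks_multiply]
    simp [fromBlocks_one]
  have hnegkron : ∀ (M : Matrix (Fin s ⊕ Fin t) (Fin s ⊕ Fin t) ℝ)
      (N : Matrix (Fin m) (Fin m) ℝ), (-M) ⊗ₖ N = -(M ⊗ₖ N) := by
    intro M N
    ext ⟨a, b⟩ ⟨c, d'⟩
    simp [kroneckerMap_apply]
  have hXY : XX * YY = -(YY * XX) := by
    rw [hXX, hYY, ← mul_kronecker_mul, ← mul_kronecker_mul, h1, one_mul, mul_one, hnegkron]
  have hXpow : ∀ k : ℕ, XX ^ k = (A₁ ^ k) ⊗ₖ (1 : Matrix (Fin m) (Fin m) ℝ) := by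
    intro k
    induction k with
    | zero => simp [one_kronecker_one]
    | succ k ih => rw [pow_succ, ih, hXX, ← mul_kronecker_mul, mul_one, ← pow_succ]
  have hY2 : YY * YY = (1 : Matrix (Fin s ⊕ Fin t) (Fin s ⊕ Fin t) ℝ) ⊗ₖ (A₂ * A₂) := by
    rw [hYY, ← mul_kronecker_mul, h2]
  have hYpow : ∀ j : ℕ, YY ^ (2 * j)
      = (1 : Matrix (Fin s ⊕ Fin t) (Fin s ⊕ Fin t) ℝ) ⊗ₖ (A₂ ^ (2 * j)) := by
    intro j
    induction j with
    | zero => simp [one_kronecker_one]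
    | succ j ih =>
      have he : 2 * (j + 1) = 2 * j + 2 := by ring
      rw [he, pow_add, ih, pow_two, hY2, ← mul_kronecker_mul, one_mul, ← pow_two, ← pow_add]
  have hA1sq : A₁ * A₁ = fromBlocks (P * Pᵀ) 0 0 (Pᵀ * P) := by
    subst hA₁
    simp [fromBlocks_multiply]
  have hA1pow : ∀ i : ℕ, A₁ ^ (2 * i) = fromBlocks ((P * Pᵀ) ^ i) 0 0 ((Pᵀ * P) ^ i) := by
    intro i
    induction i with
    | zero => simp [fromBlocks_one]
    | succ i ih =>
      have he : 2 * (i + 1) = 2 * i + 2 := by ring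
      rw [he, pow_add, ih, pow_two, hA1sq, fromBlocks_multiply]
      simp [pow_succ]
  have htrb : ∀ (A : Matrix (Fin s) (Fin s) ℝ) (B : Matrix (Fin s) (Fin t) ℝ)
      (C : Matrix (Fin t) (Fin s) ℝ) (D' : Matrix (Fin t) (Fin t) ℝ),
      (fromBlocks A B C D').trace = A.trace + D'.trace := by
    intros A B C D'
    simp [Matrix.trace, Fintype.sum_sum_type, fromBlocks]
  have htr1 : ∀ i : ℕ, (A₁ ^ (2 * i) * A₁).trace = 0 := by
    intro i
    rw [hA1pow i, hA₁, fromBlocks_multiply, htrb]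
    simp
  have hiter : ∀ i : ℕ, (Pᵀ * P) ^ (i + 1) = Pᵀ * (P * Pᵀ) ^ i * P := by
    intro i
    induction i with
    | zero => rw [pow_one, pow_zero, Matrix.mul_one]
    | succ i ih =>
      rw [pow_succ, ih, pow_succ]
      simp only [Matrix.mul_assoc]
  have htrPP : ∀ i : ℕ, ((P * Pᵀ) ^ (i + 1)).trace = ((Pᵀ * P) ^ (i + 1)).trace := by
    intro i
    conv_rhs => rw [hiter i, trace_mul_comm, ← Matrix.mul_assoc, ← pow_succ']
  have htr2 : ∀ i : ℕ, (A₁ ^ (2 * i) * D).trace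
      = if i = 0 then ((s : ℝ) - (t : ℝ)) else 0 := by
    intro i
    rw [hA1pow i, hD, fromBlocks_multiply, htrb]
    cases i with
    | zero =>
      simp only [if_pos rfl]
      simp
      ring
    | succ i =>
      simp only [Nat.succ_ne_zero, if_false, mul_one, Matrix.mul_neg, Matrix.zero_mul,
        Matrix.mul_zero, add_zero, zero_add, trace_neg]
      rw [htrPP i]
      ring
  -- main computation
  have hcomm : Commute (XX * XX) (YY * YY) := by
    have hx2 : XX * XX = (A₁ * A₁) ⊗ₖ (1 : Matrix (Fin m) (Fin m) ℝ) := by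
      rw [hXX, ← mul_kronecker_mul, one_mul]
    unfold Commute SemiconjBy
    rw [hx2, hY2, ← mul_kronecker_mul, ← mul_kronecker_mul, one_mul, mul_one, one_mul, mul_one]
  have hsq : (XX + YY) * (XX + YY) = XX * XX + YY * YY := by
    rw [add_mul, mul_add, mul_add, hXY]
    abel
  have hpow : (XX + YY) ^ (2 * e + 1) = (XX * XX + YY * YY) ^ e * (XX + YY) := by
    rw [pow_succ, pow_mul, pow_two, hsq]
  rw [hpow, hcomm.add_pow e, Finset.sum_mul, trace_sum]
  have hterm : ∀ i ∈ Finset.range (e + 1),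
      ((XX * XX) ^ i * (YY * YY) ^ (e - i) * (e.choose i : Matrix _ _ ℝ) * (XX + YY)).trace
        = (e.choose i : ℝ) * ((if i = 0 then ((s : ℝ) - (t : ℝ)) else 0)
            * (A₂ ^ (2 * (e - i)) * A₂).trace) := by
    intro i _
    have hcast : ∀ Z : Matrix ((Fin s ⊕ Fin t) × Fin m) ((Fin s ⊕ Fin t) × Fin m) ℝ,
        Z * ((e.choose i : ℕ) : Matrix _ _ ℝ) = (e.choose i : ℝ) • Z := by
      intro Z
      rw [← map_natCast (algebraMap ℝ (Matrix ((Fin s ⊕ Fin t) × Fin m)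
        ((Fin s ⊕ Fin t) × Fin m) ℝ)) (e.choose i), ← Algebra.commutes, ← Algebra.smul_def]
    rw [hcast, smul_mul_assoc, trace_smul]
    congr 1
    have hxi : (XX * XX) ^ i = (A₁ ^ (2 * i)) ⊗ₖ (1 : Matrix (Fin m) (Fin m) ℝ) := by
      rw [← pow_two, ← pow_mul, hXpow]
    have hyi : (YY * YY) ^ (e - i)
        = (1 : Matrix (Fin s ⊕ Fin t) (Fin s ⊕ Fin t) ℝ) ⊗ₖ (A₂ ^ (2 * (e - i))) := by
      rw [← pow_two, ← pow_mul, hYpow]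
    rw [hxi, hyi, ← mul_kronecker_mul, mul_one, one_mul, mul_add, hXX, hYY,
      ← mul_kronecker_mul, ← mul_kronecker_mul, mul_one, trace_add, trace_kronecker,
      trace_kronecker, htr1 i, zero_mul, zero_add, htr2 i]
  rw [Finset.sum_congr rfl hterm]
  rw [Finset.sum_eq_single_of_mem 0 (Finset.mem_range.mpr (by omega))]
  · rw [if_pos rfl, Nat.choose_zero_right, Nat.sub_zero, ← pow_succ]
    simp
  · intro i _ hi
    rw [if_neg hi, zero_mul, mul_zero]

/-- The spectrum of the signed Cartesian product `𝒜 = A₁ ⊗ I_m + D ⊗ A₂` of a signed bipartite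
adjacency matrix `A₁` (parts of sizes `s` and `t = n − s`) and a signed adjacency matrix `A₂`
is symmetric (i.e. `charpoly 𝒜 = charpoly (−𝒜)`) if and only if the bipartition is balanced
(`n = 2s`) or the spectrum of `A₂` is symmetric. -/
theorem signed_cartesian_product_spectrum_symmetric_iff (s t m : ℕ)
    (P : Matrix (Fin s) (Fin t) ℝ)
    (hP : ∀ i j, P i j = -1 ∨ P i j = 0 ∨ P i j = 1)
    (A₂ : Matrix (Fin m) (Fin m) ℝ)
    (hA₂symm : A₂.IsSymm) (hA₂diag : ∀ i, A₂ i i = 0)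
    (hA₂ent : ∀ i j, A₂ i j = -1 ∨ A₂ i j = 0 ∨ A₂ i j = 1)
    (A₁ : Matrix (Fin s ⊕ Fin t) (Fin s ⊕ Fin t) ℝ)
    (hA₁ : A₁ = Matrix.fromBlocks 0 P Pᵀ 0)
    (D : Matrix (Fin s ⊕ Fin t) (Fin s ⊕ Fin t) ℝ)
    (hD : D = Matrix.fromBlocks 1 0 0 (-1))
    (𝒜 : Matrix ((Fin s ⊕ Fin t) × Fin m) ((Fin s ⊕ Fin t) × Fin m) ℝ)
    (h𝒜 : 𝒜 = A₁ ⊗ₖ (1 : Matrix (Fin m) (Fin m) ℝ) + D ⊗ₖ A₂) :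
    𝒜.charpoly = (-𝒜).charpoly ↔ (s + t = 2 * s ∨ A₂.charpoly = (-A₂).charpoly) := by
  have hker : ∀ (M : Matrix (Fin s ⊕ Fin t) (Fin s ⊕ Fin t) ℝ) (N : Matrix (Fin m) (Fin m) ℝ),
      (M ⊗ₖ N)ᵀ = Mᵀ ⊗ₖ Nᵀ := by
    intro M N
    ext ⟨a, b⟩ ⟨c, d⟩
    simp [kroneckerMap_apply]
  have hA₁T : A₁ᵀ = A₁ := by
    rw [hA₁, fromBlocks_transpose]
    simp
  have hDT : Dᵀ = D := by
    rw [hD, fromBlocks_transpose]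
    simp
  have hA₂T : A₂ᵀ = A₂ := hA₂symm
  have h𝒜T : 𝒜ᵀ = 𝒜 := by
    rw [h𝒜, transpose_add, hker, hker, hA₁T, hDT, hA₂T, transpose_one]
  have h𝒜herm : 𝒜.IsHermitian := by
    unfold Matrix.IsHermitian
    rw [conjTranspose_eq_transpose_of_trivial]
    exact h𝒜T
  have hA₂herm : A₂.IsHermitian := by
    unfold Matrix.IsHermitian
    rw [conjTranspose_eq_transpose_of_trivial]
    exact hA₂T
  have htr : ∀ k, Odd k → (𝒜 ^ k).trace = ((s : ℝ) - (t : ℝ)) * (A₂ ^ k).trace := by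
    intro k hk
    obtain ⟨e, he⟩ := hk
    have h2 : k = 2 * e + 1 := by omega
    rw [h2, h𝒜, aux_trace_odd_pow s t m P A₂ A₁ hA₁ D hD e]
  rw [aux_hermitian_charpoly_neg_iff 𝒜 h𝒜herm, aux_hermitian_charpoly_neg_iff A₂ hA₂herm]
  constructor
  · intro h
    by_cases hcase : s + t = 2 * s
    · exact Or.inl hcase
    · right
      intro k hk
      have h1 := h k hk
      rw [htr k hk] at h1
      have hst : ((s : ℝ) - (t : ℝ)) ≠ 0 := by
        have hne : s ≠ t := by omega
        intro hc
        exact hne (by exact_mod_cast sub_eq_zero.mp hc)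
      exact (mul_eq_zero.mp h1).resolve_left hst
  · intro h k hk
    rw [htr k hk]
    rcases h with hcase | h2
    · have hst : (s : ℝ) - (t : ℝ) = 0 := by
        have : s = t := by omega
        rw [this]; ring
      rw [hst, zero_mul]
    · rw [h2 k hk, mul_zero]
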